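/- Let w be an infinite word that is linearly recurrent, i.e., there is a constant K such that for every n, every factor of w of length Kn contains every factor of w of length n. If there exists C > 0 such that for every n the total number of distinct abelian-square factors of w of length at most n is at least C·n², then w is uniformly abelian-square-rich: there exists C' > 0 such that every factor v of w contains at least C'·|v|² distinct abelian-square factors. -/

import Mathlib

/-- `u` is a factor of the infinite word `s`. -/
def FactorOf {A : Type*} (u : List A) (s : ℕ → A) : Prop :=
  ∃ i : ℕ, u = (List.range u.length).map fun k => s (i + k)

/-- An abelian square: a word `x ++ y` with `|x| = |y|` and equal Parikh
vectors. -/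
def IsAbelianSquare {A : Type*} [DecidableEq A] (w : List A) : Prop :=
  ∃ x y : List A, w = x ++ y ∧ x.length = y.length ∧
    ∀ c, x.count c = y.count c

/-- Let `w` be linearly recurrent with constant `K` (every factor of length
`K·n` contains every factor of length `n`). If the number of distinct
abelian-square factors of `w` of length at most `n` is at least `C·n²` for some
`C > 0`, then `w` is uniformly abelian-square-rich: there is `C' > 0` such that
every factor `v` of `w` contains at least `C'·|v|²` distinct abelian-square
factors. -/
theorem stmt12 {A : Type*} [DecidableEq A] (w : ℕ → A) (K : ℕ)
    (hK : ∀ n : ℕ, ∀ v : List A, FactorOf v w → v.length = K * n →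
      ∀ u : List A, FactorOf u w → u.length = n → u <:+: v)
    (C : ℝ) (hC : 0 < C)
    (h : ∀ n : ℕ, C * (n : ℝ) ^ 2 ≤
      ({u : List A | FactorOf u w ∧ IsAbelianSquare u ∧
        u.length ≤ n}.ncard : ℝ)) :
    ∃ C' : ℝ, 0 < C' ∧ ∀ v : List A, FactorOf v w →
      C' * (v.length : ℝ) ^ 2 ≤
        ({x : List A | x <:+: v ∧ IsAbelianSquare x}.ncard : ℝ) := by
  -- K ≥ 1
  have hK1 : 1 ≤ K := by
    by_contra hk
    push_neg at hk
    interval_cases K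
    have h0 : FactorOf ([] : List A) w := ⟨0, by simp⟩
    have h1 : FactorOf [w 0] w := ⟨0, by simp [List.range_succ]⟩
    have := hK 1 [] h0 (by simp) [w 0] h1 (by simp)
    simpa using this.sublist.length_le
  have hKR : (0:ℝ) < (K:ℝ) := by exact_mod_cast hK1
  refine ⟨min C 1 / (4 * (K:ℝ)^2), by positivity, ?_⟩
  intro v hv
  set m := v.length with hm
  have hTfin : {x : List A | x <:+: v ∧ IsAbelianSquare x}.Finite := by
    apply (v.sublists.toFinset.finite_toSet).subset
    intro x hx
    simpa [List.mem_sublists] using hx.1.sublist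
  have hnil : ([] : List A) ∈ {x : List A | x <:+: v ∧ IsAbelianSquare x} :=
    ⟨List.nil_infix, ⟨[], [], by simp, rfl, fun c => rfl⟩⟩
  have hone : (1:ℝ) ≤ ({x : List A | x <:+: v ∧ IsAbelianSquare x}.ncard : ℝ) := by
    have := (Set.ncard_pos hTfin).2 ⟨_, hnil⟩
    exact_mod_cast this
  by_cases hcase : m < 2*K
  · have hmR : (m:ℝ) ≤ 2*(K:ℝ) := by exact_mod_cast hcase.le
    have hmnn : (0:ℝ) ≤ (m:ℝ) := Nat.cast_nonneg m
    have hminnn : (0:ℝ) ≤ min C 1 := le_min hC.le zero_le_one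
    have hmin1 : min C 1 ≤ 1 := min_le_right _ _
    have hmain : min C 1 / (4 * (K:ℝ)^2) * (m:ℝ)^2 ≤ 1 := by
      rw [div_mul_eq_mul_div, div_le_one (by positivity)]
      nlinarith [sq_nonneg ((m:ℝ) - 2*K)]
    linarith
  · push_neg at hcase
    set n := m / K with hn
    have hsub : {u : List A | FactorOf u w ∧ IsAbelianSquare u ∧ u.length ≤ n} ⊆
        {x : List A | x <:+: v ∧ IsAbelianSquare x} := by
      rintro u ⟨hu, hsq, hlen⟩
      refine ⟨?_, hsq⟩
      obtain ⟨i, hvi⟩ := hv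
      set ℓ := u.length with hℓ
      have hKl : K * ℓ ≤ m := by
        calc K * ℓ ≤ K * n := Nat.mul_le_mul_left K hlen
          _ = (m / K) * K := by rw [hn, Nat.mul_comm]
          _ ≤ m := Nat.div_mul_le_self m K
      have hplen : (v.take (K*ℓ)).length = K*ℓ := by
        simp [Nat.min_eq_left hKl]
        exact hKl
      have hpeq : v.take (K*ℓ) = (List.range (K*ℓ)).map fun k => w (i + k) := by
        conv_lhs => rw [hvi]
        rw [← List.map_take, List.take_range, Nat.min_eq_left hKl]
      have hp : FactorOf (v.take (K*ℓ)) w := ⟨i, by rw [hplen]; exact hpeq⟩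
      have := hK ℓ _ hp hplen u hu rfl
      exact this.trans ((List.take_prefix _ _).isInfix)
    have hcard : ({u : List A | FactorOf u w ∧ IsAbelianSquare u ∧ u.length ≤ n}.ncard : ℝ)
        ≤ ({x : List A | x <:+: v ∧ IsAbelianSquare x}.ncard : ℝ) := by
      exact_mod_cast Set.ncard_le_ncard hsub hTfin
    have hmn : m ≤ 2 * (K * n) := by
      have h1 : m % K < K := Nat.mod_lt _ (by omega)
      have h2 : 1 ≤ n := (Nat.one_le_div_iff (by omega)).2 (by omega)
      have h3 : K * n + m % K = m := Nat.div_add_mod m K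
      have h4 : K ≤ K * n := Nat.le_mul_of_pos_right K h2
      omega
    have hmnR : (m:ℝ) ≤ 2 * (K:ℝ) * (n:ℝ) := by
      have : (m:ℝ) ≤ ((2 * (K * n) : ℕ) : ℝ) := by exact_mod_cast hmn
      push_cast at this
      linarith
    have hsq : (m:ℝ)^2 ≤ (2*(K:ℝ)*(n:ℝ))^2 :=
      pow_le_pow_left₀ (Nat.cast_nonneg m) hmnR 2
    calc min C 1 / (4 * (K:ℝ)^2) * (m:ℝ)^2
        ≤ min C 1 / (4 * (K:ℝ)^2) * (2*(K:ℝ)*(n:ℝ))^2 :=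
          mul_le_mul_of_nonneg_left hsq (by positivity)
      _ = min C 1 * (n:ℝ)^2 := by
          have h4 : (4 * (K:ℝ)^2) ≠ 0 := by positivity
          field_simp
          ring
      _ ≤ C * (n:ℝ)^2 := by
          gcongr
          exact min_le_left _ _
      _ ≤ _ := (h n).trans hcard
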